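/- For every finite Abelian group G and every subgroup H of G, one has D(G) ≤ D_{D(H)}(G/H). -/

import Mathlib

def hasZeroSum {G : Type*} [AddCommGroup G] (S : Multiset G) : Prop :=
  ∃ T ≤ S, T ≠ 0 ∧ T.sum = 0

def davenportSet (G : Type*) [AddCommGroup G] : Set ℕ :=
  {ℓ | ∀ S : Multiset G, ℓ ≤ Multiset.card S → hasZeroSum S}

def jDavenportSet (G : Type*) [AddCommGroup G] (j : ℕ) : Set ℕ :=
  {ℓ | ∀ S : Multiset G, ℓ ≤ Multiset.card S →
    ∃ L : List (Multiset G), L.length = j ∧ L.sum ≤ S ∧ ∀ T ∈ L, T ≠ 0 ∧ T.sum = 0}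

private lemma exists_le_map' {α β : Type*} [DecidableEq β] (f : α → β) (S : Multiset α) :
    ∀ T ≤ S.map f, ∃ U ≤ S, U.map f = T := by
  induction S using Multiset.induction_on with
  | empty =>
    intro T hT
    simp only [Multiset.map_zero, Multiset.le_zero] at hT
    exact ⟨0, le_refl _, by simp [hT]⟩
  | cons a S ih =>
    intro T hT
    rw [Multiset.map_cons] at hT
    by_cases h : f a ∈ T
    · have h1 : T.erase (f a) ≤ S.map f := by
        have := Multiset.erase_le_erase (f a) hT
        rwa [Multiset.erase_cons_head] at this
      obtain ⟨U, hU, hUm⟩ := ih _ h1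
      refine ⟨a ::ₘ U, Multiset.cons_le_cons _ hU, ?_⟩
      rw [Multiset.map_cons, hUm, Multiset.cons_erase h]
    · have h1 : T ≤ S.map f := (Multiset.le_cons_of_notMem h).mp hT
      obtain ⟨U, hU, hUm⟩ := ih _ h1
      exact ⟨U, le_trans hU (Multiset.le_cons_self _ _), hUm⟩

private lemma map_sub_of_le' {α β : Type*} [DecidableEq α] [DecidableEq β] (f : α → β) {U S : Multiset α} (h : U ≤ S) :
    (S - U).map f = S.map f - U.map f := by
  obtain ⟨K, rfl⟩ := Multiset.le_iff_exists_add.mp h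
  rw [add_tsub_cancel_left, Multiset.map_add, add_tsub_cancel_left]

private lemma lift_list' {α β : Type*} [DecidableEq α] [DecidableEq β] (f : α → β) :
    ∀ (L : List (Multiset β)) (S : Multiset α), L.sum ≤ S.map f →
    ∃ L' : List (Multiset α), L'.map (Multiset.map f) = L ∧ L'.sum ≤ S := by
  intro L
  induction L with
  | nil => intro S _; exact ⟨[], rfl, by simp⟩
  | cons T L ih =>
    intro S hS
    rw [List.sum_cons] at hS
    have hT : T ≤ S.map f := le_trans (Multiset.le_add_right _ _) hS
    obtain ⟨U, hU, hUm⟩ := exists_le_map' f S T hT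
    have hrest : L.sum ≤ (S - U).map f := by
      rw [map_sub_of_le' f hU, hUm]
      exact le_tsub_of_add_le_left hS
    obtain ⟨L', hL'map, hL'sum⟩ := ih (S - U) hrest
    refine ⟨U :: L', by simp [hUm, hL'map], ?_⟩
    rw [List.sum_cons]
    calc U + L'.sum ≤ U + (S - U) := add_le_add_right hL'sum U
      _ = S := add_tsub_cancel_of_le hU

private lemma sum_sum' {G : Type*} [AddCommMonoid G] (M : Multiset (Multiset G)) :
    M.sum.sum = (M.map Multiset.sum).sum := by
  induction M using Multiset.induction_on with
  | empty => simp
  | cons U M ih => simp [Multiset.sum_cons, ih]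

theorem stmt18 (G : Type*) [AddCommGroup G] [Fintype G] (H : AddSubgroup G)
    (DG DH DQ : ℕ)
    (hDG : IsLeast (davenportSet G) DG)
    (hDH : IsLeast (davenportSet H) DH)
    (hDQ : IsLeast (jDavenportSet (G ⧸ H) DH) DQ) :
    DG ≤ DQ := by
  classical
  apply hDG.2
  intro S hS
  set mk : G → G ⧸ H := ⇑(QuotientAddGroup.mk' H) with hmk
  have hcard : DQ ≤ Multiset.card (S.map mk) := by simpa using hS
  obtain ⟨L, hLlen, hLsum, hLprop⟩ := hDQ.1 _ hcard
  obtain ⟨L', hL'map, hL'sum⟩ := lift_list' mk L S hLsum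
  have hmemL : ∀ U ∈ L', U.map mk ∈ L := by
    intro U hU
    rw [← hL'map]
    exact List.mem_map_of_mem hU
  have hmemH : ∀ U ∈ L', U.sum ∈ H := by
    intro U hU
    have h2 := (hLprop _ (hmemL U hU)).2
    rw [← AddMonoidHom.map_multiset_sum (QuotientAddGroup.mk' H) U] at h2
    exact (QuotientAddGroup.eq_zero_iff _).mp h2
  set fH : Multiset G → H := fun U => if h : U.sum ∈ H then (⟨U.sum, h⟩ : H) else 0 with hfH
  have hlen : L'.length = DH := by
    have := congrArg List.length hL'map
    rwa [List.length_map, hLlen] at this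
  have hcardH : DH ≤ Multiset.card (↑(L'.map fH) : Multiset H) := by
    simp [hlen]
  obtain ⟨T, hT, hTne, hTsum⟩ := hDH.1 _ hcardH
  have hTle : T ≤ (↑L' : Multiset (Multiset G)).map fH := by
    rw [Multiset.map_coe]; exact hT
  obtain ⟨M, hM, hMm⟩ := exists_le_map' fH (↑L' : Multiset (Multiset G)) T hTle
  have hMmem : ∀ U ∈ M, U ∈ L' := fun U hU => by
    have := Multiset.mem_of_le hM hU
    simpa using this
  refine ⟨M.sum, ?_, ?_, ?_⟩
  · calc M.sum ≤ (↑L' : Multiset (Multiset G)).sum := by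
          obtain ⟨K, hK⟩ := Multiset.le_iff_exists_add.mp hM
          rw [hK, Multiset.sum_add]
          exact le_add_right le_rfl
      _ = L'.sum := by rw [Multiset.sum_coe]
      _ ≤ S := hL'sum
  · have hMne : M ≠ 0 := by
      intro h
      rw [h, Multiset.map_zero] at hMm
      exact hTne hMm.symm
    obtain ⟨U, hU⟩ := Multiset.exists_mem_of_ne_zero hMne
    have hUne : U ≠ 0 := by
      intro h
      have := (hLprop _ (hmemL U (hMmem U hU))).1
      rw [h, Multiset.map_zero] at this
      exact this rfl
    have hUle : U ≤ M.sum := Multiset.single_le_sum (fun x _ => Multiset.zero_le x) U hU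
    intro h
    rw [h, Multiset.le_zero] at hUle
    exact hUne hUle
  · rw [sum_sum']
    have hcongr : M.map Multiset.sum = (M.map fH).map (H.subtype) := by
      rw [Multiset.map_map]
      refine Multiset.map_congr rfl ?_
      intro U hU
      have hm := hmemH U (hMmem U hU)
      simp [hfH, hm]
    rw [hcongr, hMm, ← AddMonoidHom.map_multiset_sum, hTsum, map_zero]
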